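/- In the formal power series ring K[[X]] with char K = 0, the exponential of the derivation αX² d/dX (α ∈ K) is the automorphism g(X) ↦ g(X/(1 − αX)); i.e. for every g ∈ K[[X]], Σ_{k≥0} (1/k!) (αX² d/dX)^k g = g(X(1−αX)^{−1}). -/

import Mathlib

open PowerSeries

/-- The derivation `αX² d/dX` on `K[[X]]`. -/
noncomputable def expDer (K : Type*) [Field K] (α : K) (g : PowerSeries K) :
    PowerSeries K :=
  C (R := K) α * X ^ 2 * derivative K g

section aux
variable {K : Type*} [Field K] (α : K)

lemma coeff_expDer (h : PowerSeries K) (n : ℕ) :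
    coeff (R := K) n (expDer K α h) = α * ((n - 1 : ℕ) : K) * coeff (R := K) (n - 1) h := by
  have hrw : expDer K α h = C (R := K) α * (X ^ 2 * derivative K h) := by
    rw [expDer, mul_assoc]
  rw [hrw, coeff_C_mul, coeff_X_pow_mul']
  match n with
  | 0 => simp
  | 1 => simp
  | (m + 2) =>
    rw [if_pos (by omega)]
    have h1 : m + 2 - 2 = m := by omega
    have h2 : m + 2 - 1 = m + 1 := by omega
    rw [h1, h2, coeff_derivative]
    push_cast
    ring

lemma coeff_iter (g : PowerSeries K) (k n : ℕ) :
    coeff (R := K) n ((expDer K α)^[k] g) =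
      α ^ k * ((n - 1).descFactorial k : K) * coeff (R := K) (n - k) g := by
  induction k generalizing n with
  | zero => simp
  | succ k ih =>
    rw [Function.iterate_succ_apply', coeff_expDer, ih]
    match n with
    | 0 =>
      simp
    | (m + 1) =>
      have h2 : m + 1 - 1 = m := rfl
      rw [h2]
      match m with
      | 0 =>
        simp
      | (p + 1) =>
        have h3 : p + 1 + 1 - (k + 1) = p + 1 - k := by omega
        rw [h3, Nat.succ_descFactorial_succ]
        push_cast
        ring

lemma inv_one_sub : (1 - C (R := K) α * X)⁻¹ = mk fun m => α ^ m := by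
  rw [PowerSeries.inv_eq_iff_mul_eq_one (by simp)]
  have hrw : (mk fun m => α ^ m : PowerSeries K) * (1 - C (R := K) α * X)
      = (mk fun m => α ^ m) - ((mk fun m => α ^ m) * C (R := K) α) * X := by ring
  rw [hrw]
  ext n
  match n with
  | 0 => simp
  | (m + 1) =>
    rw [map_sub, coeff_succ_mul_X, coeff_mk, coeff_mul_C, coeff_mk, coeff_one,
      if_neg (by omega)]
    ring

lemma coeff_S_pow (m k : ℕ) :
    coeff (R := K) m ((mk fun i => α ^ i : PowerSeries K) ^ (k + 1))
      = α ^ m * ((m + k).choose k : K) := by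
  induction k generalizing m with
  | zero => simp
  | succ k ih =>
    rw [pow_succ, coeff_mul, Finset.Nat.sum_antidiagonal_eq_sum_range_succ_mk]
    have hterm : ∀ i ∈ Finset.range (m + 1),
        coeff (R := K) i ((mk fun i => α ^ i : PowerSeries K) ^ (k + 1)) *
          coeff (R := K) (m - i) (mk fun i => α ^ i : PowerSeries K)
        = α ^ m * ((i + k).choose k : K) := by
      intro i hi
      rw [Finset.mem_range] at hi
      rw [ih, coeff_mk, mul_right_comm, ← pow_add,
        show i + (m - i) = m by omega]
    rw [Finset.sum_congr rfl hterm, ← Finset.mul_sum, ← Nat.cast_sum,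
      Nat.sum_range_add_choose]
    rw [show m + (k + 1) = m + k + 1 from rfl]

end aux

theorem exp_of_X_sq_derivation (K : Type*) [Field K] [CharZero K] (α : K) :
    (∀ (g : PowerSeries K) (n k : ℕ), n < k →
      coeff (R := K) n ((expDer K α)^[k] g) = 0) ∧
    (∀ (g : PowerSeries K) (n : ℕ),
      (∑ k ∈ Finset.range (n + 1),
        ((k.factorial : K))⁻¹ * coeff (R := K) n ((expDer K α)^[k] g))
      = ∑ k ∈ Finset.range (n + 1),
          coeff (R := K) k g * coeff (R := K) n ((X * (1 - C (R := K) α * X)⁻¹) ^ k)) := by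
  constructor
  · intro g n k hnk
    rw [coeff_iter, Nat.descFactorial_eq_zero_iff_lt.mpr (by omega)]
    simp
  · intro g n
    have lhs : ∀ k ∈ Finset.range (n + 1),
        ((k.factorial : K))⁻¹ * coeff (R := K) n ((expDer K α)^[k] g)
        = ((n - 1).choose k : K) * α ^ k * coeff (R := K) (n - k) g := by
      intro k _
      rw [coeff_iter, Nat.descFactorial_eq_factorial_mul_choose]
      have hfac : ((k.factorial : K)) ≠ 0 := Nat.cast_ne_zero.mpr k.factorial_ne_zero
      push_cast
      field_simp
    rw [Finset.sum_congr rfl lhs, inv_one_sub]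
    match n with
    | 0 => simp
    | (m + 1) =>
      rw [← Finset.sum_range_reflect
        (fun k => ((m + 1 - 1).choose k : K) * α ^ k * coeff (R := K) (m + 1 - k) g) (m + 1 + 1)]
      apply Finset.sum_congr rfl
      intro k hk
      rw [Finset.mem_range] at hk
      match k with
      | 0 =>
        rw [pow_zero, coeff_one, if_neg (by omega)]
        rw [show m + 1 + 1 - 1 - 0 = m + 1 by omega,
          Nat.choose_eq_zero_of_lt (by omega : m + 1 - 1 < m + 1)]
        simp
      | (j + 1) =>
        have hj : j + 1 ≤ m + 1 := by omega
        rw [mul_pow, coeff_X_pow_mul' _ (j + 1) (m + 1), if_pos hj, coeff_S_pow,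
          show m + 1 + 1 - 1 - (j + 1) = m - j by omega,
          show m + 1 - 1 = m from rfl,
          show m + 1 - (m - j) = j + 1 by omega,
          show m + 1 - (j + 1) + j = m by omega,
          Nat.choose_symm (show j ≤ m by omega),
          show m + 1 - (j + 1) = m - j by omega]
        ring
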